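/- There exists a 2-iterated pushdown automaton with input alphabet {r, s, b, w} that accepts a word u if and only if u = r · s^k · φ(σ^k(W)) · s^k for some integer k ≥ 1; these are exactly the contour words of the truncated white sectors of the pentagrid and of the heptagrid (root read as r, the nodes of the leftmost and rightmost branches below the root read as s, and the bottom level read as the level word of the Fibonacci tree). -/

import Mathlib

/-- Operations on a 2-level iterated pushdown store. -/
inductive Op (Γ : Type*) where
  | pop1 : Op Γ
  | pop2 : Op Γ
  | push1 : List Γ → Op Γ
  | push2 : List Γ → Op Γ

/-- A 2-level pushdown store: a finite list of entries `(A, s)` with `A` a letter of `Γ`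
and `s ∈ Γ*` the inner store of the entry. -/
abbrev Store (Γ : Type*) := List (Γ × List Γ)

/-- The top symbols of a 2-level store: the letter of the top entry followed by the first
letter of its inner store when that inner store is nonempty; an element of `Γ ∪ Γ²`. -/
def topsym {Γ : Type*} : Store Γ → List Γ
  | [] => []
  | (A, s) :: _ => A :: s.take 1

/-- Apply an operation to a 2-level store (a partial operation):
`pop1` removes the top entry; `pop2` removes the first letter of the inner store of the
top entry (when nonempty); `push1 w` replaces the top entry `(A, s)` by the entries
`(w_1, s), …, (w_m, s)`; `push2 u` replaces the top entry `(A, s)` by `(A, u ++ s)`. -/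
def applyOp {Γ : Type*} : Op Γ → Store Γ → Option (Store Γ)
  | .pop1, _ :: rest => some rest
  | .pop2, (A, _ :: s) :: rest => some ((A, s) :: rest)
  | .push1 w, (_, s) :: rest => some (w.map (fun x => (x, s)) ++ rest)
  | .push2 u, (A, s) :: rest => some ((A, u ++ s) :: rest)
  | _, _ => none

/-- A 2-iterated pushdown automaton with state set `Q`, input alphabet `In` and store
alphabet `Γ`: an initial state `q0`, an initial store symbol `Z`, and a transition table
`δ` assigning to each triple `(q, a, t)` — with `a ∈ In ∪ {ε}` and `t ∈ Γ ∪ Γ²` — a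
finite set (list) of instructions `(q', op)`. -/
structure IPDA2 (Q In Γ : Type*) where
  q0 : Q
  Z : Γ
  δ : Q → Option In → List Γ → List (Q × Op Γ)

/-- A configuration: current state, remaining input word, current 2-level store. -/
abbrev Config (Q In Γ : Type*) := Q × List In × Store Γ

/-- One computation step: an instruction from `δ(q, a, topsym ω)` may be applied, where
`a = ε` (no input consumed) or `a` is the first letter of the remaining input (which is
then consumed); the state changes to `q'` and the operation is applied to the store. -/
inductive IPDA2.Step {Q In Γ : Type*} (M : IPDA2 Q In Γ) :
    Config Q In Γ → Config Q In Γ → Prop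
  | eps {q q' : Q} {w : List In} {ω ω' : Store Γ} {op : Op Γ} :
      (q', op) ∈ M.δ q none (topsym ω) → applyOp op ω = some ω' →
      M.Step (q, w, ω) (q', w, ω')
  | read {q q' : Q} {a : In} {w : List In} {ω ω' : Store Γ} {op : Op Γ} :
      (q', op) ∈ M.δ q (some a) (topsym ω) → applyOp op ω = some ω' →
      M.Step (q, a :: w, ω) (q', w, ω')

/-- A finite sequence of computation steps. -/
def IPDA2.Steps {Q In Γ : Type*} (M : IPDA2 Q In Γ) :
    Config Q In Γ → Config Q In Γ → Prop :=
  Relation.ReflTransGen M.Step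

/-- Acceptance: some finite sequence of steps leads from the initial configuration
`(q0, w, [(Z, ε)])` to a configuration with empty remaining input and empty store. -/
def IPDA2.Accepts {Q In Γ : Type*} (M : IPDA2 Q In Γ) (w : List In) : Prop :=
  ∃ q : Q, M.Steps (M.q0, w, [(M.Z, [])]) (q, [], [])

/-- The two-letter alphabet `{B, W}` of node labels. -/
inductive BW where
  | B : BW
  | W : BW
  deriving DecidableEq

/-- The substitution `σ` determined by `σ(B) = BW` and `σ(W) = BWW`, on letters. -/
def sigmaLetter : BW → List BW
  | .B => [.B, .W]
  | .W => [.B, .W, .W]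

/-- The substitution `σ` extended to words (monoid morphism of words). -/
def sigmaWord (w : List BW) : List BW := w.flatMap sigmaLetter

/-- The two-letter input alphabet `{b, w}`. -/
inductive bw where
  | b : bw
  | w : bw
  deriving DecidableEq

/-- The letter renaming `φ : B ↦ b, W ↦ w`. -/
def phi : BW → bw
  | .B => .b
  | .W => .w

/-- The four-letter input alphabet `{r, s, b, w}`. -/
inductive rsbw where
  | r : rsbw
  | s : rsbw
  | b : rsbw
  | w : rsbw
  deriving DecidableEq

/-- The letter renaming `φ : B ↦ b, W ↦ w` into the alphabet `{r, s, b, w}`. -/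
def phi' : BW → rsbw
  | .B => .b
  | .W => .w


namespace WS

inductive St | i | p1 | ps | run | eB | eW | fin
  deriving DecidableEq
instance : Fintype St :=
  ⟨{.i, .p1, .ps, .run, .eB, .eW, .fin}, fun x => by cases x <;> simp⟩
inductive Gm | Z | S | gB | gW
  deriving DecidableEq
instance : Fintype Gm :=
  ⟨{.Z, .S, .gB, .gW}, fun x => by cases x <;> simp⟩

def delta : St → Option rsbw → List Gm → List (St × Op Gm)
  | .i, some .r, [.Z] => [(.p1, .push2 [])]
  | .p1, some .s, [.Z] => [(.ps, .push2 [.S])]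
  | .ps, some .s, [.Z, .S] => [(.ps, .push2 [.S])]
  | .ps, none, [.Z, .S] => [(.run, .push1 [.gW, .Z])]
  | .run, none, [.gB, .S] => [(.eB, .pop2)]
  | .run, none, [.gW, .S] => [(.eW, .pop2)]
  | .eB, none, .gB :: _ => [(.run, .push1 [.gB, .gW])]
  | .eW, none, .gW :: _ => [(.run, .push1 [.gB, .gW, .gW])]
  | .run, some .b, [.gB] => [(.run, .pop1)]
  | .run, some .w, [.gW] => [(.run, .pop1)]
  | .run, some .s, [.Z, .S] => [(.fin, .pop2)]
  | .fin, some .s, [.Z, .S] => [(.fin, .pop2)]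
  | .fin, none, [.Z] => [(.fin, .pop1)]
  | _, _, _ => []

def M : IPDA2 St rsbw Gm := ⟨.i, .Z, delta⟩

def gl : BW → Gm
  | .B => .gB
  | .W => .gW

/-- The store entries encoding a list of (letter, level) pairs. -/
def mk (es : List (BW × ℕ)) : Store Gm :=
  es.map (fun p => (gl p.1, List.replicate p.2 Gm.S))

/-- The word still to be produced by a list of entries. -/
def yields (es : List (BW × ℕ)) : List BW :=
  es.flatMap (fun p => sigmaWord^[p.2] [p.1])

lemma sigmaWord_append (x y : List BW) :
    sigmaWord (x ++ y) = sigmaWord x ++ sigmaWord y := by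
  simp [sigmaWord]

lemma sw_iter_append (n : ℕ) (x y : List BW) :
    sigmaWord^[n] (x ++ y) = sigmaWord^[n] x ++ sigmaWord^[n] y := by
  induction n generalizing x y with
  | zero => rfl
  | succ n ih =>
    simp only [Function.iterate_succ_apply, sigmaWord_append]
    exact ih _ _

lemma sw_single (X : BW) : sigmaWord [X] = sigmaLetter X := by
  simp [sigmaWord]

lemma sw_iter_succ (n : ℕ) (X : BW) :
    sigmaWord^[n + 1] [X] = sigmaWord^[n] (sigmaLetter X) := by
  rw [Function.iterate_succ_apply, sw_single]

/-- The invariant describing the configurations reachable from `(i, u, [(Z, [])])`. -/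
def Inv (u : List rsbw) : Config St rsbw Gm → Prop
  | (.i, w, ω) => ω = [(Gm.Z, [])] ∧ u = w
  | (.p1, w, ω) => ω = [(Gm.Z, [])] ∧ u = rsbw.r :: w
  | (.ps, w, ω) => ∃ j, 1 ≤ j ∧ ω = [(Gm.Z, List.replicate j Gm.S)] ∧
      u = rsbw.r :: (List.replicate j rsbw.s ++ w)
  | (.run, w, ω) => ∃ k es v, 1 ≤ k ∧
      ω = mk es ++ [(Gm.Z, List.replicate k Gm.S)] ∧
      v ++ yields es = sigmaWord^[k] [BW.W] ∧
      u = rsbw.r :: (List.replicate k rsbw.s ++ v.map phi' ++ w)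
  | (.eB, w, ω) => ∃ k es v j, 1 ≤ k ∧
      ω = (Gm.gB, List.replicate j Gm.S) :: (mk es ++ [(Gm.Z, List.replicate k Gm.S)]) ∧
      v ++ sigmaWord^[j] (sigmaLetter .B) ++ yields es = sigmaWord^[k] [BW.W] ∧
      u = rsbw.r :: (List.replicate k rsbw.s ++ v.map phi' ++ w)
  | (.eW, w, ω) => ∃ k es v j, 1 ≤ k ∧
      ω = (Gm.gW, List.replicate j Gm.S) :: (mk es ++ [(Gm.Z, List.replicate k Gm.S)]) ∧
      v ++ sigmaWord^[j] (sigmaLetter .W) ++ yields es = sigmaWord^[k] [BW.W] ∧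
      u = rsbw.r :: (List.replicate k rsbw.s ++ v.map phi' ++ w)
  | (.fin, w, ω) =>
      (∃ k m j, 1 ≤ k ∧ ω = [(Gm.Z, List.replicate m Gm.S)] ∧ j + m = k ∧
        u = rsbw.r :: (List.replicate k rsbw.s ++ (sigmaWord^[k] [BW.W]).map phi' ++
              List.replicate j rsbw.s ++ w)) ∨
      (∃ k, 1 ≤ k ∧ ω = [] ∧
        u = rsbw.r :: (List.replicate k rsbw.s ++ (sigmaWord^[k] [BW.W]).map phi' ++
              List.replicate k rsbw.s ++ w))


lemma preserve {u : List rsbw} {q q' : St} {w w' : List rsbw} {ω ω' : Store Gm}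
    (h : Inv u (q, w, ω)) (st : M.Step (q, w, ω) (q', w', ω')) : Inv u (q', w', ω') := by
  cases st with
  | eps mem app =>
    rename_i op
    cases q with
    | i =>
      obtain ⟨rfl, rfl⟩ := h
      exact (List.not_mem_nil (show (q', op) ∈ ([] : List (St × Op Gm)) from mem)).elim
    | p1 =>
      obtain ⟨rfl, rfl⟩ := h
      exact (List.not_mem_nil (show (q', op) ∈ ([] : List (St × Op Gm)) from mem)).elim
    | ps =>
      obtain ⟨j, hj, rfl, rfl⟩ := h
      obtain ⟨j, rfl⟩ : ∃ j', j = j' + 1 := ⟨j - 1, by omega⟩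
      have mem' : (q', op) ∈ [((St.run : St), Op.push1 [Gm.gW, Gm.Z])] := mem
      simp only [List.mem_singleton, Prod.mk.injEq] at mem'
      obtain ⟨rfl, rfl⟩ := mem'
      have app' : some ([(Gm.gW, List.replicate (j+1) Gm.S), (Gm.Z, List.replicate (j+1) Gm.S)] : Store Gm) = some ω' := app
      obtain rfl := Option.some.inj app'
      refine ⟨j + 1, [(BW.W, j + 1)], [], hj, by simp [mk, gl], by simp [yields], by simp⟩
    | run =>
      obtain ⟨k, es, v, hk, rfl, hv, rfl⟩ := h
      obtain ⟨k, rfl⟩ : ∃ k', k = k' + 1 := ⟨k - 1, by omega⟩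
      rcases es with _ | ⟨⟨X, j⟩, es⟩
      · exact (List.not_mem_nil (show (q', op) ∈ ([] : List (St × Op Gm)) from mem)).elim
      · cases X with
        | B =>
          rcases j with _ | j
          · exact (List.not_mem_nil (show (q', op) ∈ ([] : List (St × Op Gm)) from mem)).elim
          · have mem' : (q', op) ∈ [((St.eB : St), Op.pop2)] := mem
            simp only [List.mem_singleton, Prod.mk.injEq] at mem'
            obtain ⟨rfl, rfl⟩ := mem'
            have app' : some ((Gm.gB, List.replicate j Gm.S) ::
                (mk es ++ [(Gm.Z, List.replicate (k+1) Gm.S)]) : Store Gm) = some ω' := app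
            obtain rfl := Option.some.inj app'
            refine ⟨k + 1, es, v, j, hk, rfl, ?_, rfl⟩
            simpa [yields, sw_iter_succ, List.append_assoc] using hv
        | W =>
          rcases j with _ | j
          · exact (List.not_mem_nil (show (q', op) ∈ ([] : List (St × Op Gm)) from mem)).elim
          · have mem' : (q', op) ∈ [((St.eW : St), Op.pop2)] := mem
            simp only [List.mem_singleton, Prod.mk.injEq] at mem'
            obtain ⟨rfl, rfl⟩ := mem'
            have app' : some ((Gm.gW, List.replicate j Gm.S) ::
                (mk es ++ [(Gm.Z, List.replicate (k+1) Gm.S)]) : Store Gm) = some ω' := app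
            obtain rfl := Option.some.inj app'
            refine ⟨k + 1, es, v, j, hk, rfl, ?_, rfl⟩
            simpa [yields, sw_iter_succ, List.append_assoc] using hv
    | eB =>
      obtain ⟨k, es, v, j, hk, rfl, hv, rfl⟩ := h
      have mem' : (q', op) ∈ [((St.run : St), Op.push1 [Gm.gB, Gm.gW])] := mem
      simp only [List.mem_singleton, Prod.mk.injEq] at mem'
      obtain ⟨rfl, rfl⟩ := mem'
      have app' : some ((Gm.gB, List.replicate j Gm.S) :: (Gm.gW, List.replicate j Gm.S) ::
          (mk es ++ [(Gm.Z, List.replicate k Gm.S)]) : Store Gm) = some ω' := app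
      obtain rfl := Option.some.inj app'
      refine ⟨k, (BW.B, j) :: (BW.W, j) :: es, v, hk, by simp [mk, gl], ?_, rfl⟩
      have e : sigmaWord^[j] (sigmaLetter .B)
          = sigmaWord^[j] [BW.B] ++ sigmaWord^[j] [BW.W] := by
        rw [show sigmaLetter BW.B = [BW.B] ++ [BW.W] from rfl, sw_iter_append]
      simpa [yields, e, List.append_assoc] using hv
    | eW =>
      obtain ⟨k, es, v, j, hk, rfl, hv, rfl⟩ := h
      have mem' : (q', op) ∈ [((St.run : St), Op.push1 [Gm.gB, Gm.gW, Gm.gW])] := mem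
      simp only [List.mem_singleton, Prod.mk.injEq] at mem'
      obtain ⟨rfl, rfl⟩ := mem'
      have app' : some ((Gm.gB, List.replicate j Gm.S) :: (Gm.gW, List.replicate j Gm.S) ::
          (Gm.gW, List.replicate j Gm.S) ::
          (mk es ++ [(Gm.Z, List.replicate k Gm.S)]) : Store Gm) = some ω' := app
      obtain rfl := Option.some.inj app'
      refine ⟨k, (BW.B, j) :: (BW.W, j) :: (BW.W, j) :: es, v, hk, by simp [mk, gl], ?_, rfl⟩
      have e : sigmaWord^[j] (sigmaLetter .W)
          = sigmaWord^[j] [BW.B] ++ (sigmaWord^[j] [BW.W] ++ sigmaWord^[j] [BW.W]) := by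
        rw [show sigmaLetter BW.W = [BW.B] ++ ([BW.W] ++ [BW.W]) from rfl, sw_iter_append,
          sw_iter_append]
      simpa [yields, e, List.append_assoc] using hv
    | fin =>
      rcases h with ⟨k, m, j, hk, rfl, hjm, rfl⟩ | ⟨k, hk, rfl, rfl⟩
      · rcases m with _ | m
        · have mem' : (q', op) ∈ [((St.fin : St), Op.pop1)] := mem
          simp only [List.mem_singleton, Prod.mk.injEq] at mem'
          obtain ⟨rfl, rfl⟩ := mem'
          have app' : some ([] : Store Gm) = some ω' := app
          obtain rfl := Option.some.inj app'
          obtain rfl : j = k := by omega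
          exact Or.inr ⟨j, hk, rfl, rfl⟩
        · exact (List.not_mem_nil (show (q', op) ∈ ([] : List (St × Op Gm)) from mem)).elim
      · cases op <;> exact (Option.some_ne_none ω' (show (none : Option (Store Gm)) = some ω' from app).symm).elim
  | read mem app =>
    rename_i a op
    cases q with
    | i =>
      obtain ⟨rfl, rfl⟩ := h
      cases a with
      | r =>
        have mem' : (q', op) ∈ [((St.p1 : St), Op.push2 [])] := mem
        simp only [List.mem_singleton, Prod.mk.injEq] at mem'
        obtain ⟨rfl, rfl⟩ := mem'
        have app' : some ([(Gm.Z, [])] : Store Gm) = some ω' := app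
        obtain rfl := Option.some.inj app'
        exact ⟨rfl, rfl⟩
      | s => exact (List.not_mem_nil (show (q', op) ∈ ([] : List (St × Op Gm)) from mem)).elim
      | b => exact (List.not_mem_nil (show (q', op) ∈ ([] : List (St × Op Gm)) from mem)).elim
      | w => exact (List.not_mem_nil (show (q', op) ∈ ([] : List (St × Op Gm)) from mem)).elim
    | p1 =>
      obtain ⟨rfl, rfl⟩ := h
      cases a with
      | s =>
        have mem' : (q', op) ∈ [((St.ps : St), Op.push2 [Gm.S])] := mem
        simp only [List.mem_singleton, Prod.mk.injEq] at mem'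
        obtain ⟨rfl, rfl⟩ := mem'
        have app' : some ([(Gm.Z, [Gm.S])] : Store Gm) = some ω' := app
        obtain rfl := Option.some.inj app'
        exact ⟨1, le_refl 1, rfl, by simp⟩
      | r => exact (List.not_mem_nil (show (q', op) ∈ ([] : List (St × Op Gm)) from mem)).elim
      | b => exact (List.not_mem_nil (show (q', op) ∈ ([] : List (St × Op Gm)) from mem)).elim
      | w => exact (List.not_mem_nil (show (q', op) ∈ ([] : List (St × Op Gm)) from mem)).elim
    | ps =>
      obtain ⟨j, hj, rfl, rfl⟩ := h
      obtain ⟨j, rfl⟩ : ∃ j', j = j' + 1 := ⟨j - 1, by omega⟩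
      cases a with
      | s =>
        have mem' : (q', op) ∈ [((St.ps : St), Op.push2 [Gm.S])] := mem
        simp only [List.mem_singleton, Prod.mk.injEq] at mem'
        obtain ⟨rfl, rfl⟩ := mem'
        have app' : some ([(Gm.Z, List.replicate (j+2) Gm.S)] : Store Gm) = some ω' := app
        obtain rfl := Option.some.inj app'
        refine ⟨j + 2, by omega, rfl, ?_⟩
        simp [List.replicate_succ' (n := j + 1)]
      | r => exact (List.not_mem_nil (show (q', op) ∈ ([] : List (St × Op Gm)) from mem)).elim
      | b => exact (List.not_mem_nil (show (q', op) ∈ ([] : List (St × Op Gm)) from mem)).elim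
      | w => exact (List.not_mem_nil (show (q', op) ∈ ([] : List (St × Op Gm)) from mem)).elim
    | run =>
      obtain ⟨k, es, v, hk, rfl, hv, rfl⟩ := h
      obtain ⟨k, rfl⟩ : ∃ k', k = k' + 1 := ⟨k - 1, by omega⟩
      rcases es with _ | ⟨⟨X, j⟩, es⟩
      · cases a with
        | s =>
          have mem' : (q', op) ∈ [((St.fin : St), Op.pop2)] := mem
          simp only [List.mem_singleton, Prod.mk.injEq] at mem'
          obtain ⟨rfl, rfl⟩ := mem'
          have app' : some ([(Gm.Z, List.replicate k Gm.S)] : Store Gm) = some ω' := app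
          obtain rfl := Option.some.inj app'
          refine Or.inl ⟨k + 1, k, 1, hk, rfl, by omega, ?_⟩
          have hv' : v = sigmaWord^[k+1] [BW.W] := by simpa [yields] using hv
          subst hv'
          simp
        | r => exact (List.not_mem_nil (show (q', op) ∈ ([] : List (St × Op Gm)) from mem)).elim
        | b => exact (List.not_mem_nil (show (q', op) ∈ ([] : List (St × Op Gm)) from mem)).elim
        | w => exact (List.not_mem_nil (show (q', op) ∈ ([] : List (St × Op Gm)) from mem)).elim
      · cases X with
        | B =>
          rcases j with _ | j
          · cases a with
            | b =>
              have mem' : (q', op) ∈ [((St.run : St), Op.pop1)] := mem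
              simp only [List.mem_singleton, Prod.mk.injEq] at mem'
              obtain ⟨rfl, rfl⟩ := mem'
              have app' : some ((mk es ++ [(Gm.Z, List.replicate (k+1) Gm.S)]) : Store Gm)
                  = some ω' := app
              obtain rfl := Option.some.inj app'
              refine ⟨k + 1, es, v ++ [BW.B], hk, rfl, ?_, by simp [phi']⟩
              simpa [yields, List.append_assoc] using hv
            | r => exact (List.not_mem_nil (show (q', op) ∈ ([] : List (St × Op Gm)) from mem)).elim
            | s => exact (List.not_mem_nil (show (q', op) ∈ ([] : List (St × Op Gm)) from mem)).elim
            | w => exact (List.not_mem_nil (show (q', op) ∈ ([] : List (St × Op Gm)) from mem)).elim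
          · cases a <;>
              exact (List.not_mem_nil (show (q', op) ∈ ([] : List (St × Op Gm)) from mem)).elim
        | W =>
          rcases j with _ | j
          · cases a with
            | w =>
              have mem' : (q', op) ∈ [((St.run : St), Op.pop1)] := mem
              simp only [List.mem_singleton, Prod.mk.injEq] at mem'
              obtain ⟨rfl, rfl⟩ := mem'
              have app' : some ((mk es ++ [(Gm.Z, List.replicate (k+1) Gm.S)]) : Store Gm)
                  = some ω' := app
              obtain rfl := Option.some.inj app'
              refine ⟨k + 1, es, v ++ [BW.W], hk, rfl, ?_, by simp [phi']⟩
              simpa [yields, List.append_assoc] using hv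
            | r => exact (List.not_mem_nil (show (q', op) ∈ ([] : List (St × Op Gm)) from mem)).elim
            | s => exact (List.not_mem_nil (show (q', op) ∈ ([] : List (St × Op Gm)) from mem)).elim
            | b => exact (List.not_mem_nil (show (q', op) ∈ ([] : List (St × Op Gm)) from mem)).elim
          · cases a <;>
              exact (List.not_mem_nil (show (q', op) ∈ ([] : List (St × Op Gm)) from mem)).elim
    | eB =>
      obtain ⟨k, es, v, j, hk, rfl, hv, rfl⟩ := h
      rcases j with _ | j <;> cases a <;>
        exact (List.not_mem_nil (show (q', op) ∈ ([] : List (St × Op Gm)) from mem)).elim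
    | eW =>
      obtain ⟨k, es, v, j, hk, rfl, hv, rfl⟩ := h
      rcases j with _ | j <;> cases a <;>
        exact (List.not_mem_nil (show (q', op) ∈ ([] : List (St × Op Gm)) from mem)).elim
    | fin =>
      rcases h with ⟨k, m, j, hk, rfl, hjm, rfl⟩ | ⟨k, hk, rfl, rfl⟩
      · rcases m with _ | m
        · cases a <;>
            exact (List.not_mem_nil (show (q', op) ∈ ([] : List (St × Op Gm)) from mem)).elim
        · cases a with
          | s =>
            have mem' : (q', op) ∈ [((St.fin : St), Op.pop2)] := mem
            simp only [List.mem_singleton, Prod.mk.injEq] at mem'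
            obtain ⟨rfl, rfl⟩ := mem'
            have app' : some ([(Gm.Z, List.replicate m Gm.S)] : Store Gm) = some ω' := app
            obtain rfl := Option.some.inj app'
            refine Or.inl ⟨k, m, j + 1, hk, rfl, by omega, ?_⟩
            simp [List.replicate_succ' (n := j), List.append_assoc]
          | r => exact (List.not_mem_nil (show (q', op) ∈ ([] : List (St × Op Gm)) from mem)).elim
          | b => exact (List.not_mem_nil (show (q', op) ∈ ([] : List (St × Op Gm)) from mem)).elim
          | w => exact (List.not_mem_nil (show (q', op) ∈ ([] : List (St × Op Gm)) from mem)).elim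
      · cases op <;> exact (Option.some_ne_none ω' (show (none : Option (Store Gm)) = some ω' from app).symm).elim

lemma inv_steps {u : List rsbw} {c c' : Config St rsbw Gm}
    (h : Inv u c) (hs : M.Steps c c') : Inv u c' := by
  induction hs with
  | refl => exact h
  | tail _ st ih =>
    obtain ⟨q, w, ω⟩ := ‹Config St rsbw Gm›
    exact preserve ih st

lemma sound {u : List rsbw} (h : M.Accepts u) :
    ∃ k : ℕ, 1 ≤ k ∧
      u = rsbw.r :: (List.replicate k rsbw.s ++
            (sigmaWord^[k] [BW.W]).map phi' ++ List.replicate k rsbw.s) := by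
  obtain ⟨q, hs⟩ := h
  have h0 : Inv u ((St.i : St), u, [(Gm.Z, [])]) := ⟨rfl, rfl⟩
  have hf := inv_steps h0 hs
  cases q with
  | i => exact absurd hf.1 (by simp)
  | p1 => exact absurd hf.1 (by simp)
  | ps => obtain ⟨j, _, hω, _⟩ := hf; exact absurd hω (by simp)
  | run => obtain ⟨k, es, v, _, hω, _, _⟩ := hf; exact absurd hω (by simp)
  | eB => obtain ⟨k, es, v, j, _, hω, _, _⟩ := hf; exact absurd hω (by simp)
  | eW => obtain ⟨k, es, v, j, _, hω, _, _⟩ := hf; exact absurd hω (by simp)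
  | fin =>
    rcases hf with ⟨k, m, j, _, hω, _, _⟩ | ⟨k, hk, _, hu⟩
    · exact absurd hω (by simp)
    · exact ⟨k, hk, by simpa using hu⟩

/-- Expansion: the automaton in state `run` consumes the image of `σ^j(X)`. -/
lemma run_expand : ∀ (j : ℕ) (X : BW) (es : Store Gm) (w : List rsbw),
    M.Steps (St.run, (sigmaWord^[j] [X]).map phi' ++ w, (gl X, List.replicate j Gm.S) :: es)
      (St.run, w, es) := by
  intro j
  induction j with
  | zero =>
    intro X es w
    cases X with
    | B =>
      refine Relation.ReflTransGen.single ?_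
      exact IPDA2.Step.read (op := Op.pop1) (List.mem_singleton.mpr rfl) rfl
    | W =>
      refine Relation.ReflTransGen.single ?_
      exact IPDA2.Step.read (op := Op.pop1) (List.mem_singleton.mpr rfl) rfl
  | succ j ih =>
    intro X es w
    cases X with
    | B =>
      have e : (sigmaWord^[j+1] [BW.B]).map phi'
          = (sigmaWord^[j] [BW.B]).map phi' ++ (sigmaWord^[j] [BW.W]).map phi' := by
        rw [sw_iter_succ, show sigmaLetter BW.B = [BW.B] ++ [BW.W] from rfl, sw_iter_append,
          List.map_append]
      rw [show gl BW.B = Gm.gB from rfl, e, List.append_assoc]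
      refine Relation.ReflTransGen.head
        (IPDA2.Step.eps (op := Op.pop2) (q' := St.eB) (List.mem_singleton.mpr rfl) rfl) ?_
      refine Relation.ReflTransGen.head
        (IPDA2.Step.eps (op := Op.push1 [Gm.gB, Gm.gW]) (q' := St.run)
          (List.mem_singleton.mpr rfl) rfl) ?_
      exact Relation.ReflTransGen.trans (ih BW.B _ _) (ih BW.W es w)
    | W =>
      have e : (sigmaWord^[j+1] [BW.W]).map phi'
          = (sigmaWord^[j] [BW.B]).map phi' ++ ((sigmaWord^[j] [BW.W]).map phi'
              ++ (sigmaWord^[j] [BW.W]).map phi') := by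
        rw [sw_iter_succ, show sigmaLetter BW.W = [BW.B] ++ ([BW.W] ++ [BW.W]) from rfl,
          sw_iter_append, sw_iter_append, List.map_append, List.map_append]
      rw [show gl BW.W = Gm.gW from rfl, e, List.append_assoc, List.append_assoc]
      refine Relation.ReflTransGen.head
        (IPDA2.Step.eps (op := Op.pop2) (q' := St.eW) (List.mem_singleton.mpr rfl) rfl) ?_
      refine Relation.ReflTransGen.head
        (IPDA2.Step.eps (op := Op.push1 [Gm.gB, Gm.gW, Gm.gW]) (q' := St.run)
          (List.mem_singleton.mpr rfl) rfl) ?_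
      exact Relation.ReflTransGen.trans (ih BW.B _ _)
        (Relation.ReflTransGen.trans (ih BW.W _ _) (ih BW.W es w))

/-- Emptying the store at the end. -/
lemma run_fin : ∀ m : ℕ,
    M.Steps (St.fin, List.replicate m rsbw.s, [(Gm.Z, List.replicate m Gm.S)])
      (St.fin, [], []) := by
  intro m
  induction m with
  | zero =>
    exact Relation.ReflTransGen.single
      (IPDA2.Step.eps (op := Op.pop1) (q' := St.fin) (List.mem_singleton.mpr rfl) rfl)
  | succ m ih =>
    refine Relation.ReflTransGen.head
      (IPDA2.Step.read (op := Op.pop2) (q' := St.fin) (a := rsbw.s)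
        (w := List.replicate m rsbw.s) (List.mem_singleton.mpr rfl) rfl) ih

/-- Reading the initial block of `s`'s. -/
lemma run_ps : ∀ (n j : ℕ) (w : List rsbw),
    M.Steps (St.ps, List.replicate n rsbw.s ++ w, [(Gm.Z, List.replicate (j+1) Gm.S)])
      (St.ps, w, [(Gm.Z, List.replicate (j+1+n) Gm.S)]) := by
  intro n
  induction n with
  | zero => intro j w; simp; exact Relation.ReflTransGen.refl
  | succ n ih =>
    intro j w
    rw [List.replicate_succ, List.cons_append]
    refine Relation.ReflTransGen.head
      (IPDA2.Step.read (op := Op.push2 [Gm.S]) (q' := St.ps) (a := rsbw.s)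
        (List.mem_singleton.mpr rfl) rfl) ?_
    have := ih (j + 1) w
    rw [show j + 1 + 1 + n = j + 1 + (n + 1) by omega] at this
    exact this

lemma complete {u : List rsbw} (k : ℕ) (hk : 1 ≤ k)
    (hu : u = rsbw.r :: (List.replicate k rsbw.s ++
        (sigmaWord^[k] [BW.W]).map phi' ++ List.replicate k rsbw.s)) :
    M.Accepts u := by
  subst hu
  obtain ⟨k, rfl⟩ : ∃ k', k = k' + 1 := ⟨k - 1, by omega⟩
  refine ⟨St.fin, ?_⟩
  -- read r
  refine Relation.ReflTransGen.head
    (IPDA2.Step.read (op := Op.push2 []) (q' := St.p1) (a := rsbw.r)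
      (List.mem_singleton.mpr rfl) rfl) ?_
  -- read the first s
  rw [List.replicate_succ, List.cons_append, List.cons_append]
  refine Relation.ReflTransGen.head
    (IPDA2.Step.read (op := Op.push2 [Gm.S]) (q' := St.ps) (a := rsbw.s)
      (List.mem_singleton.mpr rfl) rfl) ?_
  -- read the remaining k s's
  rw [List.append_assoc, ← List.replicate_succ]
  refine Relation.ReflTransGen.trans
    (by simpa [M, IPDA2.Steps] using run_ps k 0 ((sigmaWord^[k+1] [BW.W]).map phi'
        ++ List.replicate (k+1) rsbw.s)) ?_
  rw [show 0 + 1 + k = k + 1 by omega]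
  -- switch to expansion mode
  refine Relation.ReflTransGen.head
    (IPDA2.Step.eps (op := Op.push1 [Gm.gW, Gm.Z]) (q' := St.run)
      (List.mem_singleton.mpr rfl) rfl) ?_
  -- produce the image of σ^{k+1}(W)
  refine Relation.ReflTransGen.trans
    (run_expand (k+1) BW.W [(Gm.Z, List.replicate (k+1) Gm.S)] (List.replicate (k+1) rsbw.s)) ?_
  -- read the trailing s's and empty the store
  rw [List.replicate_succ]
  refine Relation.ReflTransGen.head
    (IPDA2.Step.read (op := Op.pop2) (q' := St.fin) (a := rsbw.s)
      (List.mem_singleton.mpr rfl) rfl) ?_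
  exact run_fin k

end WS

theorem exists_ipda2_white_sector_contours :
    ∃ (Q Γ : Type) (_ : Fintype Q) (_ : Fintype Γ) (M : IPDA2 Q rsbw Γ),
      ∀ u : List rsbw,
        M.Accepts u ↔
          ∃ k : ℕ, 1 ≤ k ∧
            u = rsbw.r :: (List.replicate k rsbw.s ++
                  (sigmaWord^[k] [BW.W]).map phi' ++ List.replicate k rsbw.s) := by
  exact ⟨WS.St, WS.Gm, inferInstance, inferInstance, WS.M, fun u =>
    ⟨WS.sound, fun ⟨k, hk, hu⟩ => WS.complete k hk hu⟩⟩
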